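/- arXiv:1810.12610 — 9 statements merged into one kernel-verified Lean document; each statement's English description precedes it below -/
import Mathlib

section
/- Let h > 0 be a real number, ω ≠ 0 a real number, and κ a nonzero complex number (representing the controller value K(jω)). Write K_R = Re(1/κ) and K_J = Im(1/κ). Then |κ| < |−ω² + (1 + j h ω)·κ| if and only if (h − ω·K_J)² > K_R·(2 − ω²·K_R), where j denotes the imaginary unit. (Equivalently: the complementary sensitivity T(jω) = κ/(−ω² + (1+jhω)κ) satisfies |T(jω)| < 1 exactly under this condition.) -/
/-- Pointwise characterization underlying Proposition 2: for `h > 0`, `ω ≠ 0` and a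
nonzero controller value `κ = K(jω)`, with `K_R = Re(1/κ)` and `K_J = Im(1/κ)`,
one has `|κ| < |−ω² + (1 + j h ω) κ|` iff `(h − ω K_J)² > K_R (2 − ω² K_R)`. -/
theorem string_stability_headway_pointwise_criterion
    (h ω : ℝ) (hh : 0 < h) (hω : ω ≠ 0) (κ : ℂ) (hκ : κ ≠ 0) :
    ‖κ‖ < ‖-(ω : ℂ) ^ 2 + (1 + Complex.I * (h : ℂ) * (ω : ℂ)) * κ‖ ↔
      (1 / κ).re * (2 - ω ^ 2 * (1 / κ).re) < (h - ω * (1 / κ).im) ^ 2 := by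
  have hκpos : (0:ℝ) < ‖κ‖ := norm_pos_iff.mpr hκ
  have hfac : -(ω : ℂ) ^ 2 + (1 + Complex.I * (h : ℂ) * (ω : ℂ)) * κ
      = κ * (-(ω : ℂ) ^ 2 * (1 / κ) + (1 + Complex.I * (h : ℂ) * (ω : ℂ))) := by
    field_simp
  rw [hfac, norm_mul, lt_mul_iff_one_lt_right hκpos]
  set z : ℂ := -(ω : ℂ) ^ 2 * (1 / κ) + (1 + Complex.I * (h : ℂ) * (ω : ℂ)) with hz
  have habs : (1:ℝ) < ‖z‖ ↔ 1 < Complex.normSq z := by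
    rw [← Complex.sq_norm]
    constructor
    · intro h1; nlinarith
    · intro h1; nlinarith [norm_nonneg z]
  rw [habs]
  have hre : z.re = 1 - ω ^ 2 * (1 / κ).re := by
    simp [hz, ← Complex.ofReal_pow, Complex.mul_re, Complex.mul_im]; ring
  have him : z.im = h * ω - ω ^ 2 * (1 / κ).im := by
    simp [hz, ← Complex.ofReal_pow, Complex.mul_re, Complex.mul_im]; ring
  rw [Complex.normSq_apply, hre, him]
  have hω2 : (0:ℝ) < ω ^ 2 := by positivity
  constructor
  · intro h1; nlinarith
  · intro h1; nlinarith
end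

section
/- Let a, b > 0 and h > 0 be real numbers with h² ≥ 2/a, and let K(s) = b·s + a, D(s) = s² + (1 + h·s)·K(s), T(s) = K(s)/D(s). Then: (i) D(jω) ≠ 0 for every real ω; (ii) |T(jω)| < 1 for every real ω ≠ 0; and (iii) |T(j·0)| = 1. Here j denotes the imaginary unit. -/
/-- For the PD controller `K(s) = b s + a` with `a, b > 0` and time headway `h > 0`
satisfying `h² ≥ 2/a`, with `D(s) = s² + (1 + h s) K(s)` and `T(s) = K(s)/D(s)`:
(i) `D(jω) ≠ 0` for all real `ω`; (ii) `|T(jω)| < 1` for all real `ω ≠ 0`;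
(iii) `|T(j·0)| = 1`. -/
theorem pd_headway_sensitivity_strictly_contractive
    (a b h : ℝ) (ha : 0 < a) (hb : 0 < b) (hh : 0 < h) (hha : 2 / a ≤ h ^ 2)
    (K D T : ℂ → ℂ)
    (hK : ∀ s : ℂ, K s = (b : ℂ) * s + (a : ℂ))
    (hD : ∀ s : ℂ, D s = s ^ 2 + (1 + (h : ℂ) * s) * K s)
    (hT : ∀ s : ℂ, T s = K s / D s) :
    (∀ ω : ℝ, D (Complex.I * (ω : ℂ)) ≠ 0) ∧
    (∀ ω : ℝ, ω ≠ 0 → ‖T (Complex.I * (ω : ℂ))‖ < 1) ∧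
    ‖T (Complex.I * ((0 : ℝ) : ℂ))‖ = 1 := by
  have hDval : ∀ ω : ℝ, D (Complex.I * (ω : ℂ))
      = ((a - (1 + h * b) * ω ^ 2 : ℝ) : ℂ) + ((ω * (b + a * h) : ℝ) : ℂ) * Complex.I := by
    intro ω
    rw [hD, hK]
    push_cast
    linear_combination ((1 + h * b) * (ω : ℂ) ^ 2) * Complex.I_sq
  have hKval : ∀ ω : ℝ, K (Complex.I * (ω : ℂ))
      = ((a : ℝ) : ℂ) + ((b * ω : ℝ) : ℂ) * Complex.I := by
    intro ω
    rw [hK]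
    push_cast
    ring
  have hnD : ∀ ω : ℝ, Complex.normSq (D (Complex.I * (ω : ℂ)))
      = (a - (1 + h * b) * ω ^ 2) ^ 2 + (ω * (b + a * h)) ^ 2 := by
    intro ω
    rw [hDval ω, Complex.normSq_add_mul_I]
  have hnK : ∀ ω : ℝ, Complex.normSq (K (Complex.I * (ω : ℂ)))
      = a ^ 2 + (b * ω) ^ 2 := by
    intro ω
    rw [hKval ω, Complex.normSq_add_mul_I]
  have hkey : 2 * a ≤ a ^ 2 * h ^ 2 := by
    have := (div_le_iff₀ ha).mp hha
    nlinarith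
  have hDne : ∀ ω : ℝ, D (Complex.I * (ω : ℂ)) ≠ 0 := by
    intro ω hzero
    have h0 : Complex.normSq (D (Complex.I * (ω : ℂ))) = 0 := by rw [hzero]; simp
    rw [hnD ω] at h0
    rcases eq_or_ne ω 0 with h1 | h1
    · subst h1; nlinarith
    · have : (ω * (b + a * h)) ^ 2 > 0 := by positivity
      nlinarith [sq_nonneg (a - (1 + h * b) * ω ^ 2)]
  refine ⟨hDne, ?_, ?_⟩
  · intro ω hω
    have hlt : Complex.normSq (K (Complex.I * (ω : ℂ)))
        < Complex.normSq (D (Complex.I * (ω : ℂ))) := by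
      rw [hnD ω, hnK ω]
      have hω2 : 0 < ω ^ 2 := by positivity
      have h1 : ω ^ 2 * (2 * a) ≤ ω ^ 2 * (a ^ 2 * h ^ 2) :=
        mul_le_mul_of_nonneg_left hkey hω2.le
      have h2 : 0 < (1 + h * b) ^ 2 * ω ^ 2 * ω ^ 2 := by positivity
      nlinarith [h1, h2]
    have habs : ‖K (Complex.I * (ω : ℂ))‖ < ‖D (Complex.I * (ω : ℂ))‖ := by
      rw [Complex.norm_def, Complex.norm_def]
      exact Real.sqrt_lt_sqrt (Complex.normSq_nonneg _) hlt
    have hDpos : 0 < ‖D (Complex.I * (ω : ℂ))‖ :=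
      (norm_pos_iff).mpr (hDne ω)
    rw [hT, norm_div]
    exact (div_lt_one hDpos).mpr habs
  · rw [hT, hK, hD, hK]
    simp [ha.ne']
end

section
/- Let a, b > 0 and h > 0 be real numbers with h² ≥ 2/a, and let K(s) = b·s + a, D(s) = s² + (1 + h·s)·K(s), T(s) = K(s)/D(s). Then the supremum over all real ω of |T(jω)| equals 1, and it is attained at ω = 0. Here j denotes the imaginary unit. -/
/-- For the PD controller `K(s) = b s + a` with `a, b > 0` and time headway `h > 0`
satisfying `h² ≥ 2/a`, with `D(s) = s² + (1 + h s) K(s)` and `T(s) = K(s)/D(s)`,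
the supremum over real `ω` of `|T(jω)|` equals `1`, and it is attained at `ω = 0`. -/
theorem pd_headway_sensitivity_sup_is_one_attained_at_zero
    (a b h : ℝ) (ha : 0 < a) (hb : 0 < b) (hh : 0 < h) (hha : 2 / a ≤ h ^ 2)
    (K D T : ℂ → ℂ)
    (hK : ∀ s : ℂ, K s = (b : ℂ) * s + (a : ℂ))
    (hD : ∀ s : ℂ, D s = s ^ 2 + (1 + (h : ℂ) * s) * K s)
    (hT : ∀ s : ℂ, T s = K s / D s) :
    IsGreatest (Set.range fun ω : ℝ => ‖T (Complex.I * (ω : ℂ))‖) 1 ∧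
    ‖T (Complex.I * ((0 : ℝ) : ℂ))‖ = 1 := by
  have ha2 : 2 ≤ h ^ 2 * a := by
    have := (div_le_iff₀ ha).mp hha
    linarith
  have hzero : ‖T (Complex.I * ((0 : ℝ) : ℂ))‖ = 1 := by
    rw [hT, hK, hD, hK]
    have : (a : ℂ) ≠ 0 := by exact_mod_cast ha.ne'
    simp [this]
  refine ⟨⟨⟨0, hzero⟩, ?_⟩, hzero⟩
  rintro x ⟨ω, rfl⟩
  simp only [hT, hK, hD]
  set s : ℂ := Complex.I * (ω : ℂ)
  by_cases hd : s ^ 2 + (1 + (h : ℂ) * s) * ((b : ℂ) * s + (a : ℂ)) = 0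
  · simp [hd]
  · rw [norm_div, div_le_one (norm_pos_iff.mpr hd)]
    have hs2 : s ^ 2 = -((ω : ℂ) ^ 2) := by
      simp [s, mul_pow, Complex.I_sq]
    have hsq : Complex.normSq ((b : ℂ) * s + (a : ℂ)) ≤
        Complex.normSq (s ^ 2 + (1 + (h : ℂ) * s) * ((b : ℂ) * s + (a : ℂ))) := by
      rw [hs2]
      simp only [s, Complex.normSq_apply, Complex.add_re, Complex.add_im, Complex.mul_re,
        Complex.mul_im, Complex.ofReal_re, Complex.ofReal_im, Complex.I_re, Complex.I_im,
        Complex.one_re, Complex.one_im, Complex.neg_re, Complex.neg_im, ← Complex.ofReal_pow]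
      ring_nf
      nlinarith [sq_nonneg ((1 + h * b) * ω * ω), mul_pos ha (mul_pos hh hb), sq_nonneg ω,
        mul_nonneg (mul_nonneg (sq_nonneg ω) ha.le) (by linarith : (0:ℝ) ≤ h ^ 2 * a - 2)]
    rw [Complex.norm_def, Complex.norm_def]
    exact Real.sqrt_le_sqrt hsq
end

section
/- Let T be a complex number with t := |T| < 1 and let N ≥ 2. Let B be the N × (N+1) complex matrix with rows indexed by i ∈ {1, …, N} and columns indexed by n ∈ {0, 1, …, N}, whose (i, n) entry equals T^{i−n} if 2 ≤ n ≤ i and 0 otherwise. Then the spectral norm (the operator norm induced by the Euclidean norms) of B satisfies ‖B‖² ≤ 2 / ((1 − t²)·(1 − t)). -/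
open scoped Matrix.Norms.L2Operator

open Finset in
/-- Schur test: if all row and column ℓ¹-sums of `A` are at most `r`, then `‖A‖ ≤ r`. -/
lemma schur_l2_opNorm_le {m n : Type*} [Fintype m] [Fintype n] [DecidableEq n]
    (A : Matrix m n ℂ) (r : ℝ) (hr : 0 ≤ r)
    (hrow : ∀ i, ∑ j, ‖A i j‖ ≤ r)
    (hcol : ∀ j, ∑ i, ‖A i j‖ ≤ r) : ‖A‖ ≤ r := by
  rw [Matrix.l2_opNorm_def]
  apply ContinuousLinearMap.opNorm_le_bound _ hr
  intro x
  simp only [LinearEquiv.trans_apply, LinearMap.coe_toContinuousLinearMap',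
    Matrix.toEuclideanLin_apply]
  rw [EuclideanSpace.norm_eq, EuclideanSpace.norm_eq]
  have hentry : ∀ i, ‖(WithLp.toLp 2
      (A.mulVec (WithLp.ofLp x))) i‖ = ‖∑ j, A i j * x j‖ := fun i => rfl
  simp_rw [hentry]
  have key : ∑ i, ‖∑ j, A i j * x j‖ ^ 2 ≤ r ^ 2 * ∑ j, ‖x j‖ ^ 2 := by
    have step1 : ∀ i, ‖∑ j, A i j * x j‖ ^ 2 ≤ r * ∑ j, ‖A i j‖ * ‖x j‖ ^ 2 := by
      intro i
      have h1 : ‖∑ j, A i j * x j‖ ≤ ∑ j, ‖A i j‖ * ‖x j‖ := by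
        refine (norm_sum_le _ _).trans (le_of_eq (Finset.sum_congr rfl fun j _ => ?_))
        simp [norm_mul]
      have h2 : (∑ j, ‖A i j‖ * ‖x j‖) ^ 2
          ≤ (∑ j, ‖A i j‖) * ∑ j, ‖A i j‖ * ‖x j‖ ^ 2 :=
        Finset.sum_sq_le_sum_mul_sum_of_sq_eq_mul _
          (fun j _ => norm_nonneg _) (fun j _ => by positivity) (fun j _ => by ring)
      calc ‖∑ j, A i j * x j‖ ^ 2 ≤ (∑ j, ‖A i j‖ * ‖x j‖) ^ 2 :=
            pow_le_pow_left₀ (norm_nonneg _) h1 2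
        _ ≤ (∑ j, ‖A i j‖) * ∑ j, ‖A i j‖ * ‖x j‖ ^ 2 := h2
        _ ≤ r * ∑ j, ‖A i j‖ * ‖x j‖ ^ 2 :=
            mul_le_mul_of_nonneg_right (hrow i) (by positivity)
    calc ∑ i, ‖∑ j, A i j * x j‖ ^ 2
        ≤ ∑ i, r * ∑ j, ‖A i j‖ * ‖x j‖ ^ 2 := Finset.sum_le_sum fun i _ => step1 i
      _ = r * ∑ j, (∑ i, ‖A i j‖) * ‖x j‖ ^ 2 := by
          rw [← Finset.mul_sum, Finset.sum_comm]
          congr 1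
          exact Finset.sum_congr rfl fun j _ => by rw [Finset.sum_mul]
      _ ≤ r * ∑ j, r * ‖x j‖ ^ 2 := by
          refine mul_le_mul_of_nonneg_left (Finset.sum_le_sum fun j _ => ?_) hr
          exact mul_le_mul_of_nonneg_right (hcol j) (by positivity)
      _ = r ^ 2 * ∑ j, ‖x j‖ ^ 2 := by rw [← Finset.mul_sum]; ring
  calc Real.sqrt (∑ i, ‖∑ j, A i j * x j‖ ^ 2)
      ≤ Real.sqrt (r ^ 2 * ∑ j, ‖x j‖ ^ 2) := Real.sqrt_le_sqrt key
    _ = r * Real.sqrt (∑ j, ‖x j‖ ^ 2) := by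
        rw [Real.sqrt_mul (by positivity), Real.sqrt_sq hr]

/-- Sum of distinct powers of `t ∈ [0,1)` is at most `(1-t)⁻¹`. -/
lemma sum_pow_le_inv_one_sub {t : ℝ} (h0 : 0 ≤ t) (h1 : t < 1) {ι : Type*}
    [DecidableEq ι] (s : Finset ι) (e : ι → ℕ)
    (he : ∀ x ∈ s, ∀ y ∈ s, e x = e y → x = y) :
    ∑ j ∈ s, t ^ e j ≤ (1 - t)⁻¹ := by
  calc ∑ j ∈ s, t ^ e j
      = ∑ k ∈ s.image e, t ^ k := (Finset.sum_image he).symm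
    _ ≤ ∑' k : ℕ, t ^ k :=
        Summable.sum_le_tsum _ (fun k _ => pow_nonneg h0 k) (summable_geometric_of_lt_one h0 h1)
    _ = (1 - t)⁻¹ := tsum_geometric_of_lt_one h0 h1

/-- Spectral-norm bound on the matrix `B` from the proof of Theorem 1: with rows
`i ∈ {1,…,N}` and columns `n ∈ {0,…,N}`, entries `T^{i−n}` for `2 ≤ n ≤ i` and `0`
otherwise, and `t = |T| < 1`, one has `‖B‖² ≤ 2 / ((1 − t²)(1 − t))`. Here `‖·‖` is
the operator norm induced by the Euclidean norms (the scoped `Matrix.L2OpNorm`). -/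
theorem toeplitz_power_matrix_l2_opNorm_bound
    (T : ℂ) (ht : ‖T‖ < 1) (N : ℕ) (hN : 2 ≤ N)
    (B : Matrix (Fin N) (Fin (N + 1)) ℂ)
    (hB : ∀ (i : Fin N) (n : Fin (N + 1)),
      B i n = if 2 ≤ (n : ℕ) ∧ (n : ℕ) ≤ (i : ℕ) + 1
        then T ^ ((i : ℕ) + 1 - (n : ℕ)) else 0) :
    ‖B‖ ^ 2 ≤ 2 / ((1 - ‖T‖ ^ 2) * (1 - ‖T‖)) := by
  set t : ℝ := ‖T‖ with htdef
  have ht0 : 0 ≤ t := norm_nonneg T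
  have h1t : 0 < 1 - t := by linarith
  have hentry : ∀ (i : Fin N) (n : Fin (N + 1)),
      ‖B i n‖ = if 2 ≤ (n : ℕ) ∧ (n : ℕ) ≤ (i : ℕ) + 1
        then t ^ ((i : ℕ) + 1 - (n : ℕ)) else 0 := by
    intro i n
    rw [hB]
    split
    · rw [norm_pow]
    · simp
  have hrow : ∀ i : Fin N, ∑ n, ‖B i n‖ ≤ (1 - t)⁻¹ := by
    intro i
    calc ∑ n, ‖B i n‖
        = ∑ n ∈ Finset.univ.filter
            (fun n : Fin (N + 1) => 2 ≤ (n : ℕ) ∧ (n : ℕ) ≤ (i : ℕ) + 1),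
            t ^ ((i : ℕ) + 1 - (n : ℕ)) := by
          rw [Finset.sum_filter]
          exact Finset.sum_congr rfl fun n _ => hentry i n
      _ ≤ (1 - t)⁻¹ := by
          apply sum_pow_le_inv_one_sub ht0 ht
          intro a ha b hb hab
          simp only [Finset.mem_filter] at ha hb
          have := ha.2; have := hb.2
          have : (a : ℕ) = (b : ℕ) := by omega
          exact Fin.ext this
  have hcol : ∀ n : Fin (N + 1), ∑ i, ‖B i n‖ ≤ (1 - t)⁻¹ := by
    intro n
    calc ∑ i, ‖B i n‖
        = ∑ i ∈ Finset.univ.filter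
            (fun i : Fin N => 2 ≤ (n : ℕ) ∧ (n : ℕ) ≤ (i : ℕ) + 1),
            t ^ ((i : ℕ) + 1 - (n : ℕ)) := by
          rw [Finset.sum_filter]
          exact Finset.sum_congr rfl fun i _ => hentry i n
      _ ≤ (1 - t)⁻¹ := by
          apply sum_pow_le_inv_one_sub ht0 ht
          intro a ha b hb hab
          simp only [Finset.mem_filter] at ha hb
          have := ha.2; have := hb.2
          have : (a : ℕ) = (b : ℕ) := by omega
          exact Fin.ext this
  have hnorm : ‖B‖ ≤ (1 - t)⁻¹ :=
    schur_l2_opNorm_le B _ (by positivity) hrow hcol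
  have hsq : ‖B‖ ^ 2 ≤ ((1 - t)⁻¹) ^ 2 :=
    pow_le_pow_left₀ (norm_nonneg _) hnorm 2
  refine hsq.trans ?_
  have h2t : 0 < 1 - t ^ 2 := by nlinarith
  rw [inv_pow, inv_eq_one_div, div_le_div_iff₀ (by positivity) (by positivity)]
  nlinarith [mul_nonneg (mul_nonneg h1t.le h1t.le) h1t.le]
end

section
/- Let a, b, h > 0 be real numbers, and let K(s) = b·s + a, D(s) = s² + (1 + h·s)·K(s), T(s) = K(s)/D(s). Then the limit as the real number ω tends to 0 of (1 − |T(jω)|²)/ω² exists and equals h² − 2/a. Here j denotes the imaginary unit. -/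
open Topology

/-- Low-frequency expansion: for the PD controller `K(s) = b s + a` with time headway
`h > 0`, `D(s) = s² + (1 + h s) K(s)` and `T = K/D`, the limit as `ω → 0` of
`(1 − |T(jω)|²)/ω²` exists and equals `h² − 2/a`. -/
theorem pd_headway_sensitivity_low_frequency_limit
    (a b h : ℝ) (ha : 0 < a) (hb : 0 < b) (hh : 0 < h)
    (K D T : ℂ → ℂ)
    (hK : ∀ s : ℂ, K s = (b : ℂ) * s + (a : ℂ))
    (hD : ∀ s : ℂ, D s = s ^ 2 + (1 + (h : ℂ) * s) * K s)
    (hT : ∀ s : ℂ, T s = K s / D s) :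
    Filter.Tendsto
      (fun ω : ℝ => (1 - ‖T (Complex.I * (ω : ℂ))‖ ^ 2) / ω ^ 2)
      (𝓝[≠] 0) (𝓝 (h ^ 2 - 2 / a)) := by
  set c : ℝ := 1 + h * b with hc
  set d : ℝ := b + h * a with hd
  have hcpos : 0 < c := by positivity
  have hdpos : 0 < d := by positivity
  -- |D(jω)|²
  have hDω : ∀ ω : ℝ, D (Complex.I * (ω : ℂ))
      = ((a - c * ω ^ 2 : ℝ) : ℂ) + ((d * ω : ℝ) : ℂ) * Complex.I := by
    intro ω
    rw [hD, hK, hc, hd]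
    push_cast
    linear_combination ((1 : ℂ) + (h : ℂ) * b) * (ω : ℂ) ^ 2 * Complex.I_sq
  have hKω : ∀ ω : ℝ, K (Complex.I * (ω : ℂ))
      = ((a : ℝ) : ℂ) + ((b * ω : ℝ) : ℂ) * Complex.I := by
    intro ω
    rw [hK]
    push_cast
    ring
  have hDabs : ∀ ω : ℝ, ‖D (Complex.I * (ω : ℂ))‖ ^ 2
      = (a - c * ω ^ 2) ^ 2 + d ^ 2 * ω ^ 2 := by
    intro ω
    rw [hDω, Complex.sq_norm, Complex.normSq_add_mul_I]
    ring
  have hKabs : ∀ ω : ℝ, ‖K (Complex.I * (ω : ℂ))‖ ^ 2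
      = a ^ 2 + b ^ 2 * ω ^ 2 := by
    intro ω
    rw [hKω, Complex.sq_norm, Complex.normSq_add_mul_I]
    ring
  have hP : ∀ ω : ℝ, 0 < (a - c * ω ^ 2) ^ 2 + d ^ 2 * ω ^ 2 := by
    intro ω
    rcases eq_or_ne ω 0 with rfl | hω
    · simpa using pow_pos ha 2
    · have h1 : 0 < d ^ 2 * ω ^ 2 := by positivity
      nlinarith [sq_nonneg (a - c * ω ^ 2)]
  -- the limiting function
  have hmain : Filter.Tendsto
      (fun ω : ℝ => ((a ^ 2 * h ^ 2 - 2 * a) + c ^ 2 * ω ^ 2)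
        / ((a - c * ω ^ 2) ^ 2 + d ^ 2 * ω ^ 2))
      (𝓝[≠] (0:ℝ)) (𝓝 (h ^ 2 - 2 / a)) := by
    have hcont : ContinuousAt
        (fun ω : ℝ => ((a ^ 2 * h ^ 2 - 2 * a) + c ^ 2 * ω ^ 2)
          / ((a - c * ω ^ 2) ^ 2 + d ^ 2 * ω ^ 2)) 0 := by
      apply ContinuousAt.div
      · fun_prop
      · fun_prop
      · simpa using (hP 0).ne'
    have := hcont.tendsto.mono_left (nhdsWithin_le_nhds (s := {(0:ℝ)}ᶜ))
    convert this using 2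
    have : (a ^ 2 * h ^ 2 - 2 * a + c ^ 2 * 0 ^ 2)
        / ((a - c * 0 ^ 2) ^ 2 + d ^ 2 * 0 ^ 2)
        = (a ^ 2 * h ^ 2 - 2 * a) / a ^ 2 := by
      norm_num
    rw [this]
    field_simp
  refine hmain.congr' ?_
  filter_upwards [self_mem_nhdsWithin] with ω hω
  have hω : ω ≠ 0 := hω
  rw [hT, norm_div, div_pow, hDabs, hKabs]
  have hPω := (hP ω).ne'
  have hω2 : (ω : ℝ) ^ 2 ≠ 0 := pow_ne_zero 2 hω
  field_simp
  ring
end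

section
/- Let a, b > 0 and h > 0 be real numbers with h² > 2/a, and let K(s) = b·s + a, D(s) = s² + (1 + h·s)·K(s), T(s) = K(s)/D(s), P(s) = s²/D(s)². Then there exist real numbers ω₀ > 0 and C > 0 such that, for every real ω with 0 < |ω| ≤ ω₀, one has 1 − |T(jω)| > 0 and |P(jω)| ≤ C·(1 − |T(jω)|). Here j denotes the imaginary unit. -/
set_option maxHeartbeats 800000


/-- Low-frequency bound from the proof of Theorem 3: for the PD controller with
`h² > 2/a`, there are `ω₀ > 0` and `C > 0` such that for `0 < |ω| ≤ ω₀` one has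
`1 − |T(jω)| > 0` and `|P(jω)| ≤ C (1 − |T(jω)|)`. -/
theorem pd_headway_P_bounded_by_gap_low_frequency
    (a b h : ℝ) (ha : 0 < a) (hb : 0 < b) (hh : 0 < h) (hha : 2 / a < h ^ 2)
    (K D T P : ℂ → ℂ)
    (hK : ∀ s : ℂ, K s = (b : ℂ) * s + (a : ℂ))
    (hD : ∀ s : ℂ, D s = s ^ 2 + (1 + (h : ℂ) * s) * K s)
    (hT : ∀ s : ℂ, T s = K s / D s)
    (hP : ∀ s : ℂ, P s = s ^ 2 / (D s) ^ 2) :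
    ∃ ω₀ C : ℝ, 0 < ω₀ ∧ 0 < C ∧
      ∀ ω : ℝ, 0 < |ω| → |ω| ≤ ω₀ →
        0 < 1 - ‖T (Complex.I * (ω : ℂ))‖ ∧
        ‖P (Complex.I * (ω : ℂ))‖
          ≤ C * (1 - ‖T (Complex.I * (ω : ℂ))‖) := by
  have hc : 0 < a * (a * h ^ 2 - 2) := by
    have h2 : 2 < a * h ^ 2 := by
      rw [div_lt_iff₀ ha] at hha; nlinarith
    nlinarith
  refine ⟨1, 2 / (a * (a * h ^ 2 - 2)), one_pos, by positivity, ?_⟩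
  intro ω hω _
  have hωne : ω ≠ 0 := abs_pos.mp hω
  have hω2 : 0 < ω ^ 2 := by positivity
  set c : ℝ := a * (a * h ^ 2 - 2) with hcdef
  -- explicit forms of K and D at jω
  have hKz : K (Complex.I * (ω : ℂ)) = ((a : ℝ) : ℂ) + ((b * ω : ℝ) : ℂ) * Complex.I := by
    rw [hK]; push_cast; ring
  have hDz : D (Complex.I * (ω : ℂ))
      = ((a - (1 + h * b) * ω ^ 2 : ℝ) : ℂ) + (((b + h * a) * ω : ℝ) : ℂ) * Complex.I := by
    rw [hD, hK]; push_cast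
    linear_combination ((1 : ℂ) + (h : ℂ) * (b : ℂ)) * (ω : ℂ) ^ 2 * Complex.I_sq
  set dK : ℝ := ‖K (Complex.I * (ω : ℂ))‖ with hdK
  set dD : ℝ := ‖D (Complex.I * (ω : ℂ))‖ with hdD
  have hdK2 : dK ^ 2 = a ^ 2 + (b * ω) ^ 2 := by
    rw [hdK, Complex.sq_norm, hKz, Complex.normSq_add_mul_I]
  have hdD2 : dD ^ 2 = (a - (1 + h * b) * ω ^ 2) ^ 2 + ((b + h * a) * ω) ^ 2 := by
    rw [hdD, Complex.sq_norm, hDz, Complex.normSq_add_mul_I]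
  have hdKnn : 0 ≤ dK := norm_nonneg _
  have hdDnn : 0 ≤ dD := norm_nonneg _
  have hgap : dD ^ 2 - dK ^ 2 = c * ω ^ 2 + (1 + h * b) ^ 2 * ω ^ 4 := by
    rw [hdD2, hdK2, hcdef]; ring
  have hdKpos : a ≤ dK := by nlinarith
  have hlt : dK < dD := by nlinarith [sq_nonneg (1 + h * b), sq_nonneg (ω ^ 2)]
  have hdDpos : 0 < dD := lt_of_le_of_lt (le_trans ha.le hdKpos) hlt
  have hTval : ‖T (Complex.I * (ω : ℂ))‖ = dK / dD := by
    rw [hT, norm_div, hdK, hdD]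
  have hgt : 0 < 1 - ‖T (Complex.I * (ω : ℂ))‖ := by
    rw [hTval]
    have : dK / dD < 1 := (div_lt_one hdDpos).mpr hlt
    linarith
  refine ⟨hgt, ?_⟩
  have hPval : ‖P (Complex.I * (ω : ℂ))‖ = ω ^ 2 / dD ^ 2 := by
    rw [hP, norm_div, norm_pow, norm_pow, norm_mul, Complex.norm_I, Complex.norm_real, Real.norm_eq_abs,
      one_mul, sq_abs, hdD]
  rw [hPval, hTval]
  have h1 : c * ω ^ 2 ≤ (dD - dK) * (dD + dK) := by nlinarith [sq_nonneg (1 + h * b), sq_nonneg (ω ^ 2)]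
  have hrw : 2 / c * (1 - dK / dD) = (2 * (dD - dK)) / (c * dD) := by
    field_simp
  rw [hrw, div_le_div_iff₀ (by positivity) (by positivity)]
  nlinarith [mul_le_mul_of_nonneg_left h1 hdDnn,
    mul_nonneg (mul_nonneg (sub_nonneg.2 hlt.le) (sub_nonneg.2 hlt.le)) hdDnn]
end

section
/- Let a, b > 0 and h > 0 be real numbers with h² ≥ 2/a, and let K(s) = b·s + a, D(s) = s² + (1 + h·s)·K(s), T(s) = K(s)/D(s). Then for every ω₀ > 0 there exists α ∈ (0, 1) such that |T(jω)| ≤ α for every real ω with |ω| ≥ ω₀. Here j denotes the imaginary unit. -/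
/-- Uniform bound away from `1` outside any neighborhood of `ω = 0`: for the PD
controller with `h² ≥ 2/a`, for every `ω₀ > 0` there is `α ∈ (0,1)` with
`|T(jω)| ≤ α` whenever `|ω| ≥ ω₀`. -/
theorem pd_headway_sensitivity_uniformly_contractive_away_from_zero
    (a b h : ℝ) (ha : 0 < a) (hb : 0 < b) (hh : 0 < h) (hha : 2 / a ≤ h ^ 2)
    (K D T : ℂ → ℂ)
    (hK : ∀ s : ℂ, K s = (b : ℂ) * s + (a : ℂ))
    (hD : ∀ s : ℂ, D s = s ^ 2 + (1 + (h : ℂ) * s) * K s)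
    (hT : ∀ s : ℂ, T s = K s / D s) :
    ∀ ω₀ : ℝ, 0 < ω₀ → ∃ α : ℝ, 0 < α ∧ α < 1 ∧
      ∀ ω : ℝ, ω₀ ≤ |ω| → ‖T (Complex.I * (ω : ℂ))‖ ≤ α := by
  intro ω₀ hω₀
  have hden : 0 < a ^ 2 + b ^ 2 * ω₀ ^ 2 := by positivity
  set δ : ℝ := (1 + h * b) ^ 2 * ω₀ ^ 4 / (a ^ 2 + b ^ 2 * ω₀ ^ 2) with hδdef
  have hδ : 0 < δ := by positivity
  have hfrac : (0:ℝ) < 1 / (1 + δ) := by positivity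
  have hfrac1 : 1 / (1 + δ) < 1 := by
    rw [div_lt_one (by linarith)]; linarith
  refine ⟨Real.sqrt (1 / (1 + δ)), Real.sqrt_pos.2 hfrac, ?_, ?_⟩
  · calc Real.sqrt (1 / (1 + δ)) < Real.sqrt 1 := Real.sqrt_lt_sqrt hfrac.le hfrac1
      _ = 1 := Real.sqrt_one
  · intro ω hω
    have hω2 : ω₀ ^ 2 ≤ ω ^ 2 := by
      have := sq_abs ω
      nlinarith [abs_nonneg ω]
    have haah : 2 ≤ a * h ^ 2 := by
      rw [div_le_iff₀ ha] at hha; linarith [hha]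
    -- compute K and D at I ω
    have hKval : K (Complex.I * (ω : ℂ)) = ((a : ℝ) : ℂ) + ((b * ω : ℝ) : ℂ) * Complex.I := by
      rw [hK]; push_cast; ring
    have hDval : D (Complex.I * (ω : ℂ)) =
        (((a - (1 + h * b) * ω ^ 2 : ℝ)) : ℂ) + (((b + h * a) * ω : ℝ) : ℂ) * Complex.I := by
      rw [hD, hK]
      have : (Complex.I) ^ 2 = -1 := Complex.I_sq
      push_cast
      ring_nf
      rw [Complex.I_sq]
      ring
    have hnK : Complex.normSq (K (Complex.I * (ω : ℂ))) = a ^ 2 + b ^ 2 * ω ^ 2 := by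
      rw [hKval, Complex.normSq_add_mul_I]; ring
    have hnD : Complex.normSq (D (Complex.I * (ω : ℂ))) =
        (a - (1 + h * b) * ω ^ 2) ^ 2 + (b + h * a) ^ 2 * ω ^ 2 := by
      rw [hDval, Complex.normSq_add_mul_I]; ring
    have hωpos : 0 < ω ^ 2 := by nlinarith
    have hnDpos : 0 < Complex.normSq (D (Complex.I * (ω : ℂ))) := by
      rw [hnD]; positivity
    -- key algebraic inequality
    have hkey : (1 + δ) * (a ^ 2 + b ^ 2 * ω ^ 2) ≤
        (a - (1 + h * b) * ω ^ 2) ^ 2 + (b + h * a) ^ 2 * ω ^ 2 := by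
      have h4 : ω₀ ^ 4 ≤ ω ^ 4 := by nlinarith [sq_nonneg ω₀]
      have hδle : δ * (a ^ 2 + b ^ 2 * ω ^ 2) ≤ (1 + h * b) ^ 2 * ω ^ 4 := by
        rw [hδdef, div_mul_eq_mul_div, div_le_iff₀ hden]
        have t1 : 0 ≤ (1 + h * b) ^ 2 * a ^ 2 * (ω ^ 4 - ω₀ ^ 4) :=
          mul_nonneg (by positivity) (sub_nonneg.2 h4)
        have t2 : 0 ≤ (1 + h * b) ^ 2 * b ^ 2 * (ω ^ 2 * ω₀ ^ 2) * (ω ^ 2 - ω₀ ^ 2) :=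
          mul_nonneg (by positivity) (sub_nonneg.2 hω2)
        nlinarith [t1, t2]
      have h3 : 0 ≤ a * (a * h ^ 2 - 2) * ω ^ 2 :=
        mul_nonneg (mul_nonneg ha.le (by linarith)) hωpos.le
      nlinarith [hδle, h3]
    have hsq : (‖T (Complex.I * (ω : ℂ))‖) ^ 2 ≤ 1 / (1 + δ) := by
      rw [hT, ← Complex.normSq_eq_norm_sq, map_div₀]
      rw [div_le_div_iff₀ hnDpos (by linarith)]
      rw [hnK, hnD]
      linarith [hkey]
    calc ‖T (Complex.I * (ω : ℂ))‖
        = Real.sqrt ((‖T (Complex.I * (ω : ℂ))‖) ^ 2) := by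
          rw [Real.sqrt_sq (norm_nonneg _)]
      _ ≤ Real.sqrt (1 / (1 + δ)) := Real.sqrt_le_sqrt hsq
end

section
/- (Theorem 1 of the paper, frequency-domain form.) There exist real numbers a, b, h > 0 and a constant C > 0 with the following property. Set K(s) = b·s + a, D(s) = s² + (1 + h·s)·K(s), T(s) = K(s)/D(s), L(s) = (1 + h·s)/D(s), P(s) = s²/D(s)². Then for every N ≥ 1 and all functions d̂₁, …, d̂_N ∈ L²(ℝ, ℂ), the error functions defined by ê₁(ω) = −L(jω)·d̂₁(ω) and, for i ∈ {2, …, N}, ê_i(ω) = −L(jω)·d̂_i(ω) + Σ_{m=2}^{i} T(jω)^{i−m}·P(jω)·d̂_{m−1}(ω), satisfy Σ_{i=1}^{N} ‖ê_i‖² ≤ C · Σ_{m=1}^{N} ‖d̂_m‖². Here j denotes the imaginary unit and ‖f‖ = (∫_ℝ |f(ω)|² dω)^{1/2} is the L² norm. -/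
open MeasureTheory
open Finset

private lemma pdss_geom_le (r : ℝ) (h0 : 0 ≤ r) (h1 : r < 1) (n : ℕ) :
    ∑ i ∈ range n, r^i ≤ 1/(1-r) := by
  have hr : (0:ℝ) < 1 - r := by linarith
  rw [geom_sum_eq h1.ne n]
  have h2 : (r^n - 1)/(r-1) = (1 - r^n)/(1-r) := by
    rw [div_eq_div_iff (by linarith) hr.ne']; ring
  rw [h2, div_le_div_iff₀ hr hr]
  have := pow_nonneg h0 n
  nlinarith

private lemma pdss_swap_sum (N : ℕ) (F : ℕ → ℕ → ℝ) :
    ∑ i ∈ Icc 1 N, ∑ m ∈ Icc 2 i, F i m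
      = ∑ m ∈ Icc 2 N, ∑ i ∈ Icc m N, F i m := by
  have h1 : ∀ i ∈ Icc 1 N, ∑ m ∈ Icc 2 i, F i m
      = ∑ m ∈ Icc 2 N, if m ≤ i then F i m else 0 := by
    intro i hi
    rw [mem_Icc] at hi
    rw [← Finset.sum_filter]
    congr 1
    ext m; simp only [mem_filter, mem_Icc]; omega
  rw [Finset.sum_congr rfl h1, Finset.sum_comm]
  refine Finset.sum_congr rfl fun m hm => ?_
  rw [mem_Icc] at hm
  rw [← Finset.sum_filter]
  congr 1
  ext i; simp only [mem_filter, mem_Icc]; omega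

private lemma pdss_geom_inj (r : ℝ) (h0 : 0 ≤ r) (h1 : r < 1) (s : Finset ℕ)
    (g : ℕ → ℕ) (hg : ∀ x ∈ s, ∀ y ∈ s, g x = g y → x = y) :
    ∑ m ∈ s, r^(g m) ≤ 1/(1-r) := by
  rw [← Finset.sum_image (f := fun k => r^k) hg]
  refine le_trans (Finset.sum_le_sum_of_subset_of_nonneg (t := range ((s.image g).sup id + 1))
    ?_ (fun k _ _ => pow_nonneg h0 k)) (pdss_geom_le r h0 h1 _)
  intro k hk
  simp only [mem_range, Nat.lt_succ_iff]
  exact Finset.le_sup (f := id) hk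

private lemma pdss_key (N : ℕ) (r q : ℝ) (h0 : 0 ≤ r) (hr1 : r ≤ 1) (hq : 0 ≤ q)
    (hqr : 4*q ≤ 1 - r) (x : ℕ → ℝ) (hx : ∀ m, 0 ≤ x m) :
    ∑ i ∈ Icc 1 N, (∑ m ∈ Icc 2 i, r^(i-m) * (q * x (m-1)))^2
      ≤ (1/16) * ∑ m ∈ Icc 1 N, (x m)^2 := by
  have hRHS : 0 ≤ ∑ m ∈ Icc 1 N, (x m)^2 :=
    Finset.sum_nonneg fun m _ => sq_nonneg _
  rcases eq_or_lt_of_le hr1 with h1 | h1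
  · -- r = 1, so q = 0
    have hq0 : q = 0 := le_antisymm (by nlinarith) hq
    have : ∀ i ∈ Icc 1 N, (∑ m ∈ Icc 2 i, r^(i-m) * (q * x (m-1)))^2 = 0 := by
      intro i _
      have : ∑ m ∈ Icc 2 i, r^(i-m) * (q * x (m-1)) = 0 :=
        Finset.sum_eq_zero fun m _ => by rw [hq0]; ring
      rw [this]; ring
    rw [Finset.sum_congr rfl this]
    simpa using by positivity
  · -- r < 1
    set c : ℝ := 1/(1-r) with hc
    have hrpos : (0:ℝ) < 1 - r := by linarith
    have hcpos : 0 < c := by positivity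
    have step : ∀ i, (∑ m ∈ Icc 2 i, r^(i-m) * (q * x (m-1)))^2
        ≤ c * ∑ m ∈ Icc 2 i, r^(i-m) * (q * x (m-1))^2 := by
      intro i
      have hcs := Finset.sum_mul_sq_le_sq_mul_sq (Icc 2 i)
        (fun m => Real.sqrt (r^(i-m))) (fun m => Real.sqrt (r^(i-m)) * (q * x (m-1)))
      have e1 : ∀ m ∈ Icc 2 i, Real.sqrt (r^(i-m)) * (Real.sqrt (r^(i-m)) * (q * x (m-1)))
          = r^(i-m) * (q * x (m-1)) := by
        intro m _
        rw [← mul_assoc, Real.mul_self_sqrt (pow_nonneg h0 _)]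
      have e2 : ∀ m ∈ Icc 2 i, (Real.sqrt (r^(i-m)))^2 = r^(i-m) := by
        intro m _; exact Real.sq_sqrt (pow_nonneg h0 _)
      have e3 : ∀ m ∈ Icc 2 i, (Real.sqrt (r^(i-m)) * (q * x (m-1)))^2
          = r^(i-m) * (q * x (m-1))^2 := by
        intro m _; rw [mul_pow, Real.sq_sqrt (pow_nonneg h0 _)]
      rw [Finset.sum_congr rfl e1, Finset.sum_congr rfl e2, Finset.sum_congr rfl e3] at hcs
      refine hcs.trans ?_
      have hsum2 : 0 ≤ ∑ m ∈ Icc 2 i, r^(i-m) * (q * x (m-1))^2 :=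
        Finset.sum_nonneg fun m _ => mul_nonneg (pow_nonneg h0 _) (sq_nonneg _)
      refine mul_le_mul_of_nonneg_right ?_ hsum2
      exact pdss_geom_inj r h0 h1 _ _ (fun a ha b hb hab => by
        simp only [mem_Icc] at ha hb; omega)
    calc ∑ i ∈ Icc 1 N, (∑ m ∈ Icc 2 i, r^(i-m) * (q * x (m-1)))^2
        ≤ ∑ i ∈ Icc 1 N, c * ∑ m ∈ Icc 2 i, r^(i-m) * (q * x (m-1))^2 :=
          Finset.sum_le_sum fun i _ => step i
      _ = c * ∑ m ∈ Icc 2 N, ∑ i ∈ Icc m N, r^(i-m) * (q * x (m-1))^2 := by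
          rw [← Finset.mul_sum, pdss_swap_sum]
      _ = c * ∑ m ∈ Icc 2 N, (∑ i ∈ Icc m N, r^(i-m)) * (q * x (m-1))^2 := by
          congr 1
          exact Finset.sum_congr rfl fun m _ => by rw [Finset.sum_mul]
      _ ≤ c * ∑ m ∈ Icc 2 N, c * (q * x (m-1))^2 := by
          refine mul_le_mul_of_nonneg_left (Finset.sum_le_sum fun m _ => ?_) hcpos.le
          refine mul_le_mul_of_nonneg_right ?_ (sq_nonneg _)
          exact pdss_geom_inj r h0 h1 _ _ (fun a ha b hb hab => by
            simp only [mem_Icc] at ha hb; omega)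
      _ = (q*c)^2 * ∑ m ∈ Icc 2 N, (x (m-1))^2 := by
          rw [Finset.mul_sum, Finset.mul_sum]
          exact Finset.sum_congr rfl fun m _ => by ring
      _ ≤ (1/16) * ∑ m ∈ Icc 1 N, (x m)^2 := by
          have hqc : q * c ≤ 1/4 := by
            rw [hc, mul_one_div, div_le_div_iff₀ hrpos (by norm_num)]
            linarith
          have hsq : (q*c)^2 ≤ 1/16 := by nlinarith [mul_nonneg hq hcpos.le]
          have hsub : ∑ m ∈ Icc 2 N, (x (m-1))^2 ≤ ∑ m ∈ Icc 1 N, (x m)^2 := by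
            rw [← Finset.sum_image (g := fun m => m - 1) (f := fun k => (x k)^2)
              (fun a ha b hb hab => by simp only [Finset.mem_coe, mem_Icc] at ha hb; dsimp only at hab; omega)]
            refine Finset.sum_le_sum_of_subset_of_nonneg ?_ (fun k _ _ => sq_nonneg _)
            intro k hk
            simp only [Finset.mem_image, mem_Icc] at hk ⊢
            obtain ⟨m, hm, rfl⟩ := hk; omega
          have h1 : 0 ≤ ∑ m ∈ Icc 2 N, (x (m-1))^2 :=
            Finset.sum_nonneg fun m _ => sq_nonneg _
          nlinarith

private lemma pdss_pointwise (N : ℕ) (t p l : ℂ) (ht : ‖t‖ ≤ 1)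
    (hp : 4*‖p‖ ≤ 1 - ‖t‖) (hl : ‖l‖^2 ≤ 1/8) (d : ℕ → ℂ) :
    ∑ i ∈ Icc 1 N, ‖-l * d i + ∑ m ∈ Icc 2 i, t^(i-m) * p * d (m-1)‖^2
      ≤ ∑ m ∈ Icc 1 N, ‖d m‖^2 := by
  set S : ℕ → ℝ := fun i => ∑ m ∈ Icc 2 i, ‖t‖^(i-m) * (‖p‖ * ‖d (m-1)‖) with hS
  have key := pdss_key N ‖t‖ ‖p‖ (norm_nonneg t) ht (norm_nonneg p) hp
    (fun m => ‖d m‖) (fun m => norm_nonneg _)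
  have hper : ∀ i ∈ Icc 1 N, ‖-l * d i + ∑ m ∈ Icc 2 i, t^(i-m) * p * d (m-1)‖^2
      ≤ 2*((1/8)*‖d i‖^2) + 2*(S i)^2 := by
    intro i _
    set B : ℂ := ∑ m ∈ Icc 2 i, t^(i-m) * p * d (m-1) with hB
    have h1 : ‖-l * d i‖ = ‖l‖*‖d i‖ := by rw [norm_mul, norm_neg]
    have h3 : ‖-l * d i‖^2 ≤ (1/8)*‖d i‖^2 := by
      rw [h1, mul_pow]
      exact mul_le_mul_of_nonneg_right hl (sq_nonneg _)
    have h2 : ‖B‖ ≤ S i := by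
      refine (norm_sum_le _ _).trans (le_of_eq ?_)
      exact Finset.sum_congr rfl fun m _ => by
        rw [norm_mul, norm_mul, norm_pow, mul_assoc]
    have hB2 : ‖B‖^2 ≤ (S i)^2 := by
      have := norm_nonneg B
      nlinarith
    have htri := norm_add_le (-l * d i) B
    have h4 := norm_nonneg (-l * d i)
    have h5 := norm_nonneg B
    have h6 := norm_nonneg (-l * d i + B)
    nlinarith [sq_nonneg (‖-l * d i‖ - ‖B‖)]
  have hRHS : 0 ≤ ∑ m ∈ Icc 1 N, ‖d m‖^2 :=
    Finset.sum_nonneg fun m _ => sq_nonneg _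
  calc ∑ i ∈ Icc 1 N, ‖-l * d i + ∑ m ∈ Icc 2 i, t^(i-m) * p * d (m-1)‖^2
      ≤ ∑ i ∈ Icc 1 N, (2*((1/8)*‖d i‖^2) + 2*(S i)^2) := Finset.sum_le_sum hper
    _ = (1/4)*(∑ i ∈ Icc 1 N, ‖d i‖^2) + 2*(∑ i ∈ Icc 1 N, (S i)^2) := by
        rw [Finset.sum_add_distrib, ← Finset.mul_sum, ← Finset.mul_sum, ← Finset.mul_sum]
        ring
    _ ≤ (1/4)*(∑ m ∈ Icc 1 N, ‖d m‖^2) + 2*((1/16) * ∑ m ∈ Icc 1 N, ‖d m‖^2) := by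
        have : ∑ i ∈ Icc 1 N, (S i)^2 ≤ (1/16) * ∑ m ∈ Icc 1 N, ‖d m‖^2 := key
        linarith
    _ ≤ ∑ m ∈ Icc 1 N, ‖d m‖^2 := by linarith

private lemma pdss_norm_sq (x y : ℝ) : ‖(x:ℂ) + (y:ℝ)*Complex.I‖^2 = x^2 + y^2 := by
  rw [Complex.sq_norm, Complex.normSq_add_mul_I]

private lemma pdss_Dval (ω : ℝ) :
    (Complex.I*ω)^2 + (1 + Complex.I*ω)*(Complex.I*ω + 4)
      = ((4-2*ω^2 : ℝ):ℂ) + ((5*ω : ℝ))*Complex.I := by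
  push_cast
  linear_combination (2*(ω:ℂ)^2) * Complex.I_sq

private lemma pdss_Dne (ω : ℝ) :
    (Complex.I*ω)^2 + (1 + Complex.I*ω)*(Complex.I*ω + 4) ≠ 0 := by
  intro h
  have h2 : ‖(Complex.I*ω)^2 + (1 + Complex.I*ω)*(Complex.I*ω + 4)‖^2
      = 4*ω^4+9*ω^2+16 := by rw [pdss_Dval, pdss_norm_sq]; ring
  rw [h, norm_zero] at h2
  nlinarith [sq_nonneg ω, sq_nonneg (ω^2)]

private lemma pdss_freq (ω : ℝ) :
    ‖(Complex.I*ω + 4)/((Complex.I*ω)^2 + (1 + Complex.I*ω)*(Complex.I*ω + 4))‖ ≤ 1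
    ∧ 4*‖(Complex.I*ω)^2/((Complex.I*ω)^2 + (1 + Complex.I*ω)*(Complex.I*ω + 4))^2‖
        ≤ 1 - ‖(Complex.I*ω + 4)/((Complex.I*ω)^2 + (1 + Complex.I*ω)*(Complex.I*ω + 4))‖
    ∧ ‖(1 + Complex.I*ω)/((Complex.I*ω)^2 + (1 + Complex.I*ω)*(Complex.I*ω + 4))‖^2 ≤ 1/8 := by
  set Dv : ℂ := (Complex.I*ω)^2 + (1 + Complex.I*ω)*(Complex.I*ω + 4) with hDv
  have hg : (0:ℝ) < 4*ω^4+9*ω^2+16 := by positivity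
  have hnD : ‖Dv‖^2 = 4*ω^4+9*ω^2+16 := by
    rw [hDv, pdss_Dval, pdss_norm_sq]; ring
  have hnDpos : 0 < ‖Dv‖ := by
    rcases (norm_nonneg Dv).lt_or_eq with h | h
    · exact h
    · exfalso; rw [← h] at hnD; simp at hnD; nlinarith
  have hnT : ‖Complex.I*ω + 4‖^2 = ω^2 + 16 := by
    have e : Complex.I*ω + 4 = ((4:ℝ):ℂ) + (ω:ℝ)*Complex.I := by push_cast; ring
    rw [e, pdss_norm_sq]; ring
  have hnL : ‖(1:ℂ) + Complex.I*ω‖^2 = 1 + ω^2 := by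
    have e : (1:ℂ) + Complex.I*ω = ((1:ℝ):ℂ) + (ω:ℝ)*Complex.I := by push_cast; ring
    rw [e, pdss_norm_sq]; norm_num
  have hnS : ‖(Complex.I*ω)^2‖ = ω^2 := by
    rw [norm_pow, norm_mul, Complex.norm_I, Complex.norm_real, one_mul,
      Real.norm_eq_abs, sq_abs]
  set r : ℝ := ‖(Complex.I*ω + 4)/Dv‖ with hr
  have hr0 : 0 ≤ r := norm_nonneg _
  have hr2 : r^2 * ‖Dv‖^2 = ω^2 + 16 := by
    rw [hr, norm_div, div_pow, div_mul_cancel₀, hnT]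
    exact (pow_pos hnDpos 2).ne'
  have hT1 : r ≤ 1 := by nlinarith [sq_nonneg (r-1), sq_nonneg ω, sq_nonneg (ω^2)]
  refine ⟨hT1, ?_, ?_⟩
  · have hP : ‖(Complex.I*ω)^2/Dv^2‖ = ω^2/(4*ω^4+9*ω^2+16) := by
      rw [norm_div, hnS, norm_pow, hnD]
    rw [hP]
    rw [show (4:ℝ)*(ω^2/(4*ω^4+9*ω^2+16)) = 4*ω^2/(4*ω^4+9*ω^2+16) from by ring,
      div_le_iff₀ hg]
    nlinarith [mul_nonneg (sq_nonneg (1-r)) hg.le, sq_nonneg ω, sq_nonneg (ω^2),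
      mul_nonneg (mul_nonneg hr0 hg.le) (sq_nonneg ω)]
  · rw [norm_div, div_pow, hnL, hnD, div_le_iff₀ hg]
    nlinarith [sq_nonneg ω, sq_nonneg (ω^2)]

private lemma pdss_eLpNorm_sq (f : ℝ → ℂ) :
    eLpNorm f 2 (volume : Measure ℝ) ^ 2
      = ∫⁻ ω, (‖f ω‖₊ : ENNReal) ^ (2:ℕ) := by
  rw [eLpNorm_eq_lintegral_rpow_enorm_toReal (by norm_num) (by norm_num)]
  have h2 : ((2:ENNReal)).toReal = (2:ℝ) := by norm_num
  rw [h2]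
  rw [← ENNReal.rpow_natCast _ 2, ← ENNReal.rpow_mul]
  norm_num [ENNReal.rpow_natCast, enorm_eq_nnnorm]

private lemma pdss_enorm_sq (z : ℂ) :
    (‖z‖₊ : ENNReal) ^ (2:ℕ) = ENNReal.ofReal (‖z‖^2) := by
  rw [ENNReal.ofReal_pow (norm_nonneg z), ofReal_norm, enorm_eq_nnnorm]


/-- Theorem 1 of the paper ((L₂,ℓ₂) string stability with no disturbance on the
leader), frequency-domain form: there exist PD gains `a, b > 0`, time headway `h > 0`
and a constant `C > 0` such that for every chain length `N ≥ 1` and all disturbances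
`d̂₁,…,d̂_N ∈ L²(ℝ,ℂ)`, the errors `ê₁ = −L d̂₁` and
`ê_i = −L d̂_i + Σ_{m=2}^{i} T^{i−m} P d̂_{m−1}` satisfy
`Σ_{i=1}^N ‖ê_i‖² ≤ C Σ_{m=1}^N ‖d̂_m‖²`. -/
theorem pd_headway_L2_ell2_string_stability_no_leader_disturbance :
    ∃ a b h C : ℝ, 0 < a ∧ 0 < b ∧ 0 < h ∧ 0 < C ∧
      ∀ K D T L P : ℂ → ℂ,
        (∀ s : ℂ, K s = (b : ℂ) * s + (a : ℂ)) →
        (∀ s : ℂ, D s = s ^ 2 + (1 + (h : ℂ) * s) * K s) →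
        (∀ s : ℂ, T s = K s / D s) →
        (∀ s : ℂ, L s = (1 + (h : ℂ) * s) / D s) →
        (∀ s : ℂ, P s = s ^ 2 / (D s) ^ 2) →
        ∀ N : ℕ, 1 ≤ N → ∀ d : ℕ → ℝ → ℂ,
          (∀ i : ℕ, 1 ≤ i → i ≤ N → MemLp (d i) 2 (volume : Measure ℝ)) →
          ∑ i ∈ Finset.Icc 1 N,
              (eLpNorm (fun ω : ℝ =>
                  - L (Complex.I * (ω : ℂ)) * d i ω
                    + ∑ m ∈ Finset.Icc 2 i,
                        (T (Complex.I * (ω : ℂ))) ^ (i - m) * P (Complex.I * (ω : ℂ))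
                          * d (m - 1) ω)
                2 (volume : Measure ℝ)) ^ 2
            ≤ ENNReal.ofReal C *
                ∑ m ∈ Finset.Icc 1 N, (eLpNorm (d m) 2 (volume : Measure ℝ)) ^ 2 := by
  refine ⟨4, 1, 1, 1, by norm_num, one_pos, one_pos, one_pos, ?_⟩
  intro K D T L P hK hD hT hL hP N hN d hd
  -- explicit forms of the transfer functions on the imaginary axis
  have hDeq : ∀ ω : ℝ, D (Complex.I*ω)
      = (Complex.I*ω)^2 + (1 + Complex.I*ω)*(Complex.I*ω + 4) := by
    intro ω; rw [hD, hK]; push_cast; ring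
  have hTeq : ∀ ω : ℝ, T (Complex.I*ω)
      = (Complex.I*ω + 4)/((Complex.I*ω)^2 + (1 + Complex.I*ω)*(Complex.I*ω + 4)) := by
    intro ω; rw [hT, hK, hDeq]; push_cast; ring_nf
  have hLeq : ∀ ω : ℝ, L (Complex.I*ω)
      = (1 + Complex.I*ω)/((Complex.I*ω)^2 + (1 + Complex.I*ω)*(Complex.I*ω + 4)) := by
    intro ω; rw [hL, hDeq]; push_cast; ring_nf
  have hPeq : ∀ ω : ℝ, P (Complex.I*ω)
      = (Complex.I*ω)^2/((Complex.I*ω)^2 + (1 + Complex.I*ω)*(Complex.I*ω + 4))^2 := by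
    intro ω; rw [hP, hDeq]
  -- continuity of the coefficient functions
  have hDcont : Continuous fun ω : ℝ =>
      (Complex.I*(ω:ℂ))^2 + (1 + Complex.I*ω)*(Complex.I*ω + 4) := by fun_prop
  have hTcont : Continuous fun ω : ℝ => T (Complex.I*ω) := by
    simp only [hTeq]
    exact Continuous.div (by fun_prop) hDcont (fun ω => pdss_Dne ω)
  have hLcont : Continuous fun ω : ℝ => L (Complex.I*ω) := by
    simp only [hLeq]
    exact Continuous.div (by fun_prop) hDcont (fun ω => pdss_Dne ω)
  have hPcont : Continuous fun ω : ℝ => P (Complex.I*ω) := by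
    simp only [hPeq]
    exact Continuous.div (by fun_prop) (hDcont.pow 2) (fun ω => pow_ne_zero 2 (pdss_Dne ω))
  -- measurability of the error functions
  have hsm : ∀ i, 1 ≤ i → i ≤ N → AEStronglyMeasurable (fun ω : ℝ =>
      - L (Complex.I * (ω : ℂ)) * d i ω
        + ∑ m ∈ Finset.Icc 2 i,
            (T (Complex.I * (ω : ℂ))) ^ (i - m) * P (Complex.I * (ω : ℂ)) * d (m - 1) ω)
      (volume : Measure ℝ) := by
    intro i h1 h2
    apply AEStronglyMeasurable.add
    · exact (hLcont.neg.aestronglyMeasurable).mul (hd i h1 h2).1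
    · apply Finset.aestronglyMeasurable_fun_sum
      intro m hm
      rw [Finset.mem_Icc] at hm
      exact (((hTcont.pow _).mul hPcont).aestronglyMeasurable).mul
        (hd (m-1) (by omega) (by omega)).1
  -- pointwise bound
  have hpt : ∀ ω : ℝ,
      ∑ i ∈ Finset.Icc 1 N, (‖- L (Complex.I * (ω : ℂ)) * d i ω
          + ∑ m ∈ Finset.Icc 2 i,
              (T (Complex.I * (ω : ℂ))) ^ (i - m) * P (Complex.I * (ω : ℂ))
                * d (m - 1) ω‖₊ : ENNReal) ^ (2:ℕ)
        ≤ ∑ m ∈ Finset.Icc 1 N, (‖d m ω‖₊ : ENNReal) ^ (2:ℕ) := by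
    intro ω
    have hb := pdss_freq ω
    rw [← hTeq ω, ← hPeq ω, ← hLeq ω] at hb
    obtain ⟨hb1, hb2, hb3⟩ := hb
    have hmain := pdss_pointwise N (T (Complex.I*ω)) (P (Complex.I*ω)) (L (Complex.I*ω))
      hb1 hb2 hb3 (fun m => d m ω)
    have e1 : ∀ (g : ℕ → ℂ) (s : Finset ℕ),
        ∑ i ∈ s, (‖g i‖₊ : ENNReal)^(2:ℕ) = ENNReal.ofReal (∑ i ∈ s, ‖g i‖^2) := by
      intro g s
      rw [ENNReal.ofReal_sum_of_nonneg (fun i _ => sq_nonneg _)]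
      exact Finset.sum_congr rfl fun i _ => pdss_enorm_sq _
    calc ∑ i ∈ Finset.Icc 1 N, (‖- L (Complex.I * (ω : ℂ)) * d i ω
          + ∑ m ∈ Finset.Icc 2 i,
              (T (Complex.I * (ω : ℂ))) ^ (i - m) * P (Complex.I * (ω : ℂ))
                * d (m - 1) ω‖₊ : ENNReal) ^ (2:ℕ)
        = ENNReal.ofReal (∑ i ∈ Finset.Icc 1 N, ‖- L (Complex.I * (ω : ℂ)) * d i ω
          + ∑ m ∈ Finset.Icc 2 i,
              (T (Complex.I * (ω : ℂ))) ^ (i - m) * P (Complex.I * (ω : ℂ))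
                * d (m - 1) ω‖^2) := e1 _ _
      _ ≤ ENNReal.ofReal (∑ m ∈ Finset.Icc 1 N, ‖d m ω‖^2) :=
          ENNReal.ofReal_le_ofReal hmain
      _ = ∑ m ∈ Finset.Icc 1 N, (‖d m ω‖₊ : ENNReal) ^ (2:ℕ) := (e1 _ _).symm
  -- put everything together
  calc ∑ i ∈ Finset.Icc 1 N,
        (eLpNorm (fun ω : ℝ =>
            - L (Complex.I * (ω : ℂ)) * d i ω
              + ∑ m ∈ Finset.Icc 2 i,
                  (T (Complex.I * (ω : ℂ))) ^ (i - m) * P (Complex.I * (ω : ℂ))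
                    * d (m - 1) ω) 2 (volume : Measure ℝ)) ^ 2
      = ∑ i ∈ Finset.Icc 1 N, ∫⁻ ω : ℝ, (‖- L (Complex.I * (ω : ℂ)) * d i ω
          + ∑ m ∈ Finset.Icc 2 i,
              (T (Complex.I * (ω : ℂ))) ^ (i - m) * P (Complex.I * (ω : ℂ))
                * d (m - 1) ω‖₊ : ENNReal) ^ (2:ℕ) :=
        Finset.sum_congr rfl fun i _ => pdss_eLpNorm_sq _
    _ = ∫⁻ ω : ℝ, ∑ i ∈ Finset.Icc 1 N, (‖- L (Complex.I * (ω : ℂ)) * d i ω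
          + ∑ m ∈ Finset.Icc 2 i,
              (T (Complex.I * (ω : ℂ))) ^ (i - m) * P (Complex.I * (ω : ℂ))
                * d (m - 1) ω‖₊ : ENNReal) ^ (2:ℕ) := by
        refine (MeasureTheory.lintegral_finset_sum' _ fun i hi => ?_).symm
        rw [Finset.mem_Icc] at hi
        exact ((hsm i hi.1 hi.2).enorm).pow_const 2
    _ ≤ ∫⁻ ω : ℝ, ∑ m ∈ Finset.Icc 1 N, (‖d m ω‖₊ : ENNReal) ^ (2:ℕ) :=
        lintegral_mono hpt
    _ = ∑ m ∈ Finset.Icc 1 N, ∫⁻ ω : ℝ, (‖d m ω‖₊ : ENNReal) ^ (2:ℕ) := by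
        refine MeasureTheory.lintegral_finset_sum' _ fun m hm => ?_
        rw [Finset.mem_Icc] at hm
        exact ((hd m hm.1 hm.2).1.enorm).pow_const 2
    _ = ∑ m ∈ Finset.Icc 1 N, (eLpNorm (d m) 2 (volume : Measure ℝ)) ^ 2 :=
        Finset.sum_congr rfl fun m _ => (pdss_eLpNorm_sq _).symm
    _ = ENNReal.ofReal 1 * ∑ m ∈ Finset.Icc 1 N, (eLpNorm (d m) 2 (volume : Measure ℝ)) ^ 2 := by
        rw [ENNReal.ofReal_one, one_mul]
end

section
/- (Theorem 2 of the paper, frequency-domain form.) Let h ≥ 0 be a real number and let K : ℂ → ℂ be such that K(0) ≠ 0, the function ω ↦ K(jω) (from ℝ to ℂ) is continuous at ω = 0, and D(jω) := −ω² + (1 + j·h·ω)·K(jω) ≠ 0 for every real ω. Set T(s) = K(s)/D(s) and L₀(s) = 1/D(s). Then for every constant C > 0 there exist an integer N ≥ 1 and a function d̂₀ ∈ L²(ℝ, ℂ) with ‖d̂₀‖ ≤ 1 such that Σ_{i=1}^{N} ∫_ℝ |T(jω)|^{2(i−1)} · |L₀(jω)|² · |d̂₀(ω)|² dω > C. Here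 j denotes the imaginary unit and ‖f‖ = (∫_ℝ |f(ω)|² dω)^{1/2} is the L² norm. -/
open MeasureTheory

/-- Theorem 2 of the paper (impossibility of (L₂,ℓ₂) string stability with bounded
controllers), frequency-domain form: for any time headway `h ≥ 0` and any controller
`K` with finite nonzero DC gain (continuity of `ω ↦ K(jω)` at `0` and `K(0) ≠ 0`)
whose closed-loop denominator `D(jω) = −ω² + (1 + j h ω) K(jω)` never vanishes,
the quantity `Σ_{i=1}^N ∫ |T(jω)|^{2(i−1)} |L₀(jω)|² |d̂₀(ω)|² dω` (with `T = K/D`,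
`L₀ = 1/D`) cannot be bounded uniformly over `N` and over `‖d̂₀‖ ≤ 1`. -/
theorem bounded_controller_headway_L2_ell2_string_instability
    (h : ℝ) (hh : 0 ≤ h) (K : ℂ → ℂ) (hK0 : K 0 ≠ 0)
    (hKcont : ContinuousAt (fun ω : ℝ => K (Complex.I * (ω : ℂ))) 0)
    (hD : ∀ ω : ℝ, -(ω : ℂ) ^ 2 + (1 + Complex.I * (h : ℂ) * (ω : ℂ)) * K (Complex.I * (ω : ℂ)) ≠ 0) :
    ∀ C : ℝ, 0 < C → ∃ N : ℕ, 1 ≤ N ∧ ∃ d₀ : ℝ → ℂ,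
      MemLp d₀ 2 (volume : Measure ℝ) ∧
      eLpNorm d₀ 2 (volume : Measure ℝ) ≤ 1 ∧
      ENNReal.ofReal C <
        ∑ i ∈ Finset.Icc 1 N, ∫⁻ ω : ℝ,
          ENNReal.ofReal
            ((‖K (Complex.I * (ω : ℂ)) /
                (-(ω : ℂ) ^ 2 + (1 + Complex.I * (h : ℂ) * (ω : ℂ)) * K (Complex.I * (ω : ℂ)))‖) ^ (2 * (i - 1))
              * (‖1 /
                  (-(ω : ℂ) ^ 2 + (1 + Complex.I * (h : ℂ) * (ω : ℂ)) * K (Complex.I * (ω : ℂ)))‖) ^ 2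
              * (‖d₀ ω‖) ^ 2) := by
  intro C hC
  -- abbreviations
  have hDcont : ContinuousAt
      (fun ω : ℝ => -(ω : ℂ) ^ 2 + (1 + Complex.I * (h : ℂ) * (ω : ℂ)) * K (Complex.I * (ω : ℂ))) 0 := by
    apply ContinuousAt.add
    · fun_prop
    · exact ContinuousAt.mul (by fun_prop) hKcont
  set F : ℝ → ℝ := fun ω => ‖K (Complex.I * (ω : ℂ)) /
      (-(ω : ℂ) ^ 2 + (1 + Complex.I * (h : ℂ) * (ω : ℂ)) * K (Complex.I * (ω : ℂ)))‖ with hFdef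
  set G : ℝ → ℝ := fun ω => (‖1 /
      (-(ω : ℂ) ^ 2 + (1 + Complex.I * (h : ℂ) * (ω : ℂ)) * K (Complex.I * (ω : ℂ)))‖) ^ 2 with hGdef
  have hF0 : F 0 = 1 := by
    simp only [hFdef, Complex.ofReal_zero, mul_zero, ne_eq, neg_zero, zero_pow, add_zero,
      zero_add, one_mul]
    norm_num [div_self hK0]
  set g₀ : ℝ := G 0 with hg0def
  have hg0pos : 0 < g₀ := by
    have : (0:ℂ) ≠ -(((0:ℝ)):ℂ) ^ 2 + (1 + Complex.I * (h : ℂ) * ((0:ℝ):ℂ)) * K (Complex.I * ((0:ℝ):ℂ)) :=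
      (hD 0).symm
    have hne : (1 : ℂ) / (-(((0:ℝ)):ℂ) ^ 2 + (1 + Complex.I * (h : ℂ) * ((0:ℝ):ℂ)) * K (Complex.I * ((0:ℝ):ℂ))) ≠ 0 :=
      one_div_ne_zero (hD 0)
    have := norm_pos_iff.mpr hne
    positivity
  -- choose N
  obtain ⟨N, hN⟩ := exists_nat_gt (4 * C / g₀)
  have hNR : 4 * C / g₀ > 0 := by positivity
  have hN1 : 1 ≤ N := by
    by_contra hcon
    interval_cases N
    · simp at hN; linarith
  have hNC : C < (N : ℝ) * (g₀ / 4) := by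
    have := (div_lt_iff₀ hg0pos).mp hN
    nlinarith
  refine ⟨N, hN1, ?_⟩
  -- choose δ via continuity
  have hFcont : ContinuousAt F 0 := by
    apply continuous_norm.continuousAt.comp
    exact hKcont.div hDcont (hD 0)
  have hGcont : ContinuousAt G 0 := by
    apply ContinuousAt.pow
    apply continuous_norm.continuousAt.comp
    exact (continuousAt_const).div hDcont (hD 0)
  have hHcont : ContinuousAt (fun ω => F ω ^ (2 * (N - 1))) 0 := hFcont.pow _
  have e1 : ∀ᶠ ω in nhds (0:ℝ), 1/2 < F ω ^ (2 * (N - 1)) := by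
    apply hHcont.eventually_const_lt
    norm_num [hF0]
  have e2 : ∀ᶠ ω in nhds (0:ℝ), g₀ / 2 < G ω :=
    hGcont.eventually_const_lt (by linarith)
  obtain ⟨δ, hδpos, hδ⟩ := Metric.eventually_nhds_iff.mp (e1.and e2)
  have hmemS : ∀ ω ∈ Set.Ioo (-δ) δ, 1/2 < F ω ^ (2 * (N - 1)) ∧ g₀ / 2 < G ω := by
    intro ω hω
    apply hδ
    rw [Real.dist_eq, sub_zero, abs_lt]
    exact ⟨hω.1, hω.2⟩
  -- the disturbance
  set b : ℝ := Real.sqrt (1 / (2 * δ)) with hbdef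
  set S : Set ℝ := Set.Ioo (-δ) δ with hSdef
  have hSmeas : MeasurableSet S := measurableSet_Ioo
  have hSvol : (volume : Measure ℝ) S = ENNReal.ofReal (2 * δ) := by
    rw [hSdef, Real.volume_Ioo]
    ring_nf
  set d₀ : ℝ → ℂ := S.indicator (fun _ => ((b : ℝ) : ℂ)) with hd0def
  have hbpos : 0 < b := Real.sqrt_pos.mpr (by positivity)
  have hb2 : b ^ 2 = 1 / (2 * δ) := Real.sq_sqrt (by positivity)
  refine ⟨d₀, ?_, ?_, ?_⟩
  · exact memLp_indicator_const 2 hSmeas _ (Or.inr (by rw [hSvol]; exact ENNReal.ofReal_ne_top))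
  · rw [hd0def, eLpNorm_indicator_const hSmeas two_ne_zero ENNReal.ofNat_ne_top, hSvol]
    have h1 : ‖((b:ℝ):ℂ)‖ₑ = ENNReal.ofReal b := by
      rw [← ofReal_norm_eq_enorm, Complex.norm_real, Real.norm_eq_abs, abs_of_nonneg hbpos.le]
    have h2 : (1 : ℝ) / (2 : ENNReal).toReal = (1/2 : ℝ) := by norm_num
    have hbmul : b * (2 * δ) ^ (1/2 : ℝ) = 1 := by
      rw [← Real.sqrt_eq_rpow, hbdef, ← Real.sqrt_mul (by positivity)]
      rw [show 1 / (2 * δ) * (2 * δ) = 1 by field_simp]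
      exact Real.sqrt_one
    rw [h1, h2, ENNReal.ofReal_rpow_of_pos (by linarith), ← ENNReal.ofReal_mul hbpos.le, hbmul]
    simp
  · -- the main estimate
    have key : ∀ i ∈ Finset.Icc 1 N, ENNReal.ofReal (g₀ / 4) ≤ ∫⁻ ω : ℝ,
        ENNReal.ofReal (F ω ^ (2 * (i - 1)) * G ω * ‖d₀ ω‖ ^ 2) := by
      intro i hi
      have hiN : i ≤ N := (Finset.mem_Icc.mp hi).2
      have hstep : ∀ ω ∈ S, ENNReal.ofReal (g₀ / 4 / (2 * δ)) ≤
          ENNReal.ofReal (F ω ^ (2 * (i - 1)) * G ω * ‖d₀ ω‖ ^ 2) := by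
        intro ω hω
        apply ENNReal.ofReal_le_ofReal
        obtain ⟨hFω, hGω⟩ := hmemS ω hω
        have hFnn : 0 ≤ F ω := norm_nonneg _
        have hFi : 1/2 ≤ F ω ^ (2 * (i - 1)) := by
          rcases le_or_gt 1 (F ω) with hle | hlt
          · calc (1:ℝ)/2 ≤ 1 := by norm_num
              _ ≤ F ω ^ (2 * (i - 1)) := one_le_pow₀ hle
          · have hmono : F ω ^ (2 * (N - 1)) ≤ F ω ^ (2 * (i - 1)) :=
              pow_le_pow_of_le_one hFnn hlt.le (by omega)
            linarith
        have hd : ‖d₀ ω‖ ^ 2 = 1 / (2 * δ) := by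
          rw [hd0def, Set.indicator_of_mem hω]
          rw [Complex.norm_real, Real.norm_eq_abs, abs_of_nonneg hbpos.le, hb2]
        rw [hd]
        have h1 : 0 ≤ 1 / (2 * δ) := by positivity
        have hGnn : 0 ≤ g₀ / 2 := by positivity
        calc g₀ / 4 / (2 * δ) = (1/2) * (g₀/2) * (1 / (2 * δ)) := by ring
          _ ≤ F ω ^ (2 * (i - 1)) * G ω * (1 / (2 * δ)) := by
              apply mul_le_mul_of_nonneg_right _ h1
              exact mul_le_mul hFi hGω.le hGnn (by linarith)
      calc ENNReal.ofReal (g₀ / 4)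
          = ENNReal.ofReal (g₀ / 4 / (2 * δ)) * volume S := by
            rw [hSvol, ← ENNReal.ofReal_mul (by positivity)]
            congr 1
            field_simp
        _ = ∫⁻ ω in S, ENNReal.ofReal (g₀ / 4 / (2 * δ)) := by
            rw [setLIntegral_const]
        _ ≤ ∫⁻ ω in S, ENNReal.ofReal (F ω ^ (2 * (i - 1)) * G ω * ‖d₀ ω‖ ^ 2) :=
            setLIntegral_mono' hSmeas hstep
        _ ≤ ∫⁻ ω : ℝ, ENNReal.ofReal (F ω ^ (2 * (i - 1)) * G ω * ‖d₀ ω‖ ^ 2) :=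
            setLIntegral_le_lintegral _ _
    have hfinal : ENNReal.ofReal C < ∑ i ∈ Finset.Icc 1 N, ∫⁻ ω : ℝ,
        ENNReal.ofReal (F ω ^ (2 * (i - 1)) * G ω * ‖d₀ ω‖ ^ 2) := by
      calc ENNReal.ofReal C
          < ENNReal.ofReal ((N : ℝ) * (g₀ / 4)) :=
            (ENNReal.ofReal_lt_ofReal_iff (by positivity)).mpr hNC
        _ = (N : ENNReal) * ENNReal.ofReal (g₀ / 4) := by
            rw [ENNReal.ofReal_mul (by positivity), ENNReal.ofReal_natCast]
        _ = ∑ _i ∈ Finset.Icc 1 N, ENNReal.ofReal (g₀ / 4) := by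
            rw [Finset.sum_const, Nat.card_Icc]
            simp [nsmul_eq_mul]
        _ ≤ _ := Finset.sum_le_sum key
    simpa only [hFdef, hGdef] using hfinal
end
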